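/- Let G be a finite simple graph and let uv be a non-edge of G with a = d_G(u) and b = d_G(v). Then the fourth power sums of the complex roots of the Laplacian matching polynomials satisfy p_4(G+uv) − p_4(G) = 4·(S_u + S_v) + 4a³ + 18a² + 4ab + 24a + 4b³ + 18b² + 24b + 16, where S_w = Σ_{x∈N_G(w)} d_G(x). -/

import Mathlib

open Polynomial Finset

namespace LMRIV

open scoped Classical

variable {V : Type*}

/-- The degree of a vertex. -/
noncomputable def deg [Fintype V] (G : SimpleGraph V) (v : V) : ℕ :=
  (univ.filter fun w => G.Adj v w).card

/-- The finset of edges of `G`. -/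
noncomputable def edges [Fintype V] (G : SimpleGraph V) : Finset (Sym2 V) :=
  univ.filter fun e => e ∈ G.edgeSet

/-- A matching: a set of pairwise disjoint edges. -/
def IsMatching (G : SimpleGraph V) (M : Finset (Sym2 V)) : Prop :=
  (↑M : Set (Sym2 V)) ⊆ G.edgeSet ∧
    ∀ e ∈ M, ∀ f ∈ M, e ≠ f → ∀ x : V, x ∈ e → x ∉ f

/-- The finset of all matchings of `G` (including the empty matching). -/
noncomputable def matchings [Fintype V] (G : SimpleGraph V) : Finset (Finset (Sym2 V)) :=
  univ.filter fun M => IsMatching G M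

/-- The set of vertices covered by a matching. -/
noncomputable def covered [Fintype V] (M : Finset (Sym2 V)) : Finset V :=
  univ.filter fun x => ∃ e ∈ M, x ∈ e

/-- The Laplacian matching polynomial of `G`, with coefficients in `R`. -/
noncomputable def LM (R : Type*) [CommRing R] [Fintype V] (G : SimpleGraph V) :
    Polynomial R :=
  ∑ M ∈ matchings G, (-1 : Polynomial R) ^ M.card *
    ∏ v ∈ univ \ covered M, (X - C (deg G v : R))

/-- `p_r(G)`: the sum of the `r`-th powers of the complex roots of `LM_G`. -/
noncomputable def psum [Fintype V] (G : SimpleGraph V) (r : ℕ) : ℂ :=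
  (((LM ℂ G).roots).map (· ^ r)).sum

/-- `A_r(G) = Σ_v d_G(v)^r`. -/
noncomputable def A [Fintype V] (G : SimpleGraph V) (r : ℕ) : ℕ :=
  ∑ v : V, (deg G v) ^ r

/-- `B(G) = Σ_{xy ∈ E(G)} d_G(x) d_G(y)`. -/
noncomputable def B [Fintype V] (G : SimpleGraph V) : ℕ :=
  ∑ e ∈ edges G, Sym2.lift ⟨fun x y => deg G x * deg G y, fun x y => mul_comm _ _⟩ e

/-- `C(G) = Σ_{xy ∈ E(G)} (d_G(x)^2 d_G(y) + d_G(x) d_G(y)^2)`. -/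
noncomputable def Csum [Fintype V] (G : SimpleGraph V) : ℕ :=
  ∑ e ∈ edges G,
    Sym2.lift ⟨fun x y => deg G x ^ 2 * deg G y + deg G x * deg G y ^ 2,
      fun x y => by ring⟩ e

/-- The graph obtained from `G` by adding the edge `uv`. -/
def addEdge (G : SimpleGraph V) (u v : V) : SimpleGraph V :=
  G ⊔ SimpleGraph.fromEdgeSet {s(u, v)}

/-- `S_w = Σ_{x ∈ N_G(w)} d_G(x)`. -/
noncomputable def Ssum [Fintype V] (G : SimpleGraph V) (w : V) : ℕ :=
  ∑ x ∈ univ.filter fun x => G.Adj w x, deg G x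

/-- `T_w = Σ_{x ∈ N_G(w)} d_G(x)^2`. -/
noncomputable def Tsum [Fintype V] (G : SimpleGraph V) (w : V) : ℕ :=
  ∑ x ∈ univ.filter fun x => G.Adj w x, (deg G x) ^ 2

/-- The `r`-th elementary symmetric polynomial of the degree sequence of `G`. -/
noncomputable def esymmDeg [Fintype V] (G : SimpleGraph V) (r : ℕ) : ℕ :=
  ∑ s ∈ univ.powersetCard r, ∏ v ∈ s, deg G v

/-- `φ_2(G)`: the number of 2-matchings of `G`. -/
noncomputable def phi2 [Fintype V] (G : SimpleGraph V) : ℕ :=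
  ((matchings G).filter fun M => M.card = 2).card


/-! ### Auxiliary development -/

/-! ### Multiset algebra: elementary symmetric functions and power sums -/

lemma esymm_cons (a : ℂ) (s : Multiset ℂ) (k : ℕ) :
    (a ::ₘ s).esymm (k+1) = s.esymm (k+1) + a * s.esymm k := by
  simp only [Multiset.esymm, Multiset.powersetCard_cons, Multiset.map_add, Multiset.sum_add,
    Multiset.map_map, Function.comp]
  congr 1
  have : (Multiset.map (fun x : Multiset ℂ => (a ::ₘ x).prod) (Multiset.powersetCard k s)) =
      (Multiset.map (fun x : Multiset ℂ => a * x.prod) (Multiset.powersetCard k s)) :=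
    Multiset.map_congr rfl (fun t _ => by simp [Multiset.prod_cons])
  rw [this, Multiset.sum_map_mul_left]

lemma esymm_zero' (s : Multiset ℂ) : s.esymm 0 = 1 := by
  simp [Multiset.esymm, Multiset.powersetCard_zero_left]

lemma esymm_one' (s : Multiset ℂ) : s.esymm 1 = s.sum := by
  simp [Multiset.esymm, Multiset.powersetCard_one, Multiset.map_map, Function.comp]

lemma esymm_cons1 (a : ℂ) (s : Multiset ℂ) : (a ::ₘ s).esymm 1 = s.esymm 1 + a := by
  have := esymm_cons a s 0; rw [esymm_zero'] at this; simpa using this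

lemma esymm_cons2 (a : ℂ) (s : Multiset ℂ) :
    (a ::ₘ s).esymm 2 = s.esymm 2 + a * s.esymm 1 := esymm_cons a s 1

lemma esymm_cons3 (a : ℂ) (s : Multiset ℂ) :
    (a ::ₘ s).esymm 3 = s.esymm 3 + a * s.esymm 2 := esymm_cons a s 2

lemma esymm_cons4 (a : ℂ) (s : Multiset ℂ) :
    (a ::ₘ s).esymm 4 = s.esymm 4 + a * s.esymm 3 := esymm_cons a s 3

lemma esymm2_eq (s : Multiset ℂ) :
    s.esymm 2 = (s.sum^2 - (s.map (·^2)).sum)/2 := by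
  induction s using Multiset.induction with
  | empty => simp [Multiset.esymm, Multiset.powersetCard_eq_empty 2 (s := (0 : Multiset ℂ)) (by simp)]
  | cons a s ih =>
    rw [esymm_cons2, ih, esymm_one']
    simp only [Multiset.map_cons, Multiset.sum_cons]
    field_simp
    ring

lemma esymm3_eq (s : Multiset ℂ) :
    s.esymm 3 = (s.sum^3 - 3*s.sum*(s.map (·^2)).sum + 2*(s.map (·^3)).sum)/6 := by
  induction s using Multiset.induction with
  | empty => simp [Multiset.esymm, Multiset.powersetCard_eq_empty 3 (s := (0 : Multiset ℂ)) (by simp)]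
  | cons a s ih =>
    rw [esymm_cons3, ih, esymm2_eq]
    simp only [Multiset.map_cons, Multiset.sum_cons]
    field_simp
    ring

lemma newton4 (s : Multiset ℂ) :
    (s.map (·^4)).sum =
      (s.esymm 1)^4 - 4*(s.esymm 1)^2*(s.esymm 2) + 2*(s.esymm 2)^2
        + 4*(s.esymm 1)*(s.esymm 3) - 4*(s.esymm 4) := by
  induction s using Multiset.induction with
  | empty => simp [Multiset.esymm, Multiset.powersetCard_eq_empty 1 (s := (0 : Multiset ℂ)) (by simp), Multiset.powersetCard_eq_empty 2 (s := (0 : Multiset ℂ)) (by simp), Multiset.powersetCard_eq_empty 3 (s := (0 : Multiset ℂ)) (by simp), Multiset.powersetCard_eq_empty 4 (s := (0 : Multiset ℂ)) (by simp)]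
  | cons a s ih =>
    rw [Multiset.map_cons, Multiset.sum_cons, ih, esymm_cons1, esymm_cons2, esymm_cons3,
      esymm_cons4]
    ring

lemma esymm_cons_zero (s : Multiset ℂ) (k : ℕ) :
    ((0:ℂ) ::ₘ s).esymm k = s.esymm k := by
  cases k with
  | zero => simp [Multiset.esymm, Multiset.powersetCard_zero_left]
  | succ k => rw [esymm_cons]; ring

lemma esymm_padded (s : Multiset ℂ) (k : ℕ) :
    (s + Multiset.replicate 4 0).esymm k = s.esymm k := by
  have : s + Multiset.replicate 4 0 = 0 ::ₘ 0 ::ₘ 0 ::ₘ 0 ::ₘ s := by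
    rw [show (4:ℕ) = 0+1+1+1+1 by norm_num]
    simp [Multiset.replicate_succ, Multiset.replicate_zero]
    rw [add_comm]
    rfl
  rw [this, esymm_cons_zero, esymm_cons_zero, esymm_cons_zero, esymm_cons_zero]

lemma padded_prod (s : Multiset ℂ) :
    (s.map (fun t => X - C t)).prod * X^4
      = ((s + Multiset.replicate 4 0).map (fun t => X - C t)).prod := by
  rw [Multiset.map_add, Multiset.prod_add]
  congr 1
  simp [Multiset.map_replicate, Multiset.prod_replicate]
  ring

lemma coeff_prod_X_sub_C_padded (s : Multiset ℂ) {k : ℕ} (hk : k ≤ 4) :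
    ((s.map (fun t => X - C t)).prod * X^4).coeff (Multiset.card s + 4 - k)
      = (-1)^k * s.esymm k := by
  rw [padded_prod]
  have hcard : Multiset.card (s + Multiset.replicate 4 0) = Multiset.card s + 4 := by simp
  have h1 : Multiset.card s + 4 - k ≤ Multiset.card (s + Multiset.replicate 4 0) := by
    rw [hcard]; omega
  rw [Multiset.prod_X_sub_C_coeff _ h1, hcard, esymm_padded]
  congr 2 <;> omega

section Basics
variable [Fintype V] (G : SimpleGraph V)

lemma mem_edges {e : Sym2 V} : e ∈ edges G ↔ e ∈ G.edgeSet := by simp [edges]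

lemma mem_covered {M : Finset (Sym2 V)} {x : V} : x ∈ covered M ↔ ∃ e ∈ M, x ∈ e := by
  simp [covered]

lemma covered_empty : covered (∅ : Finset (Sym2 V)) = ∅ := by ext x; simp [covered]

lemma covered_pair (x y : V) : covered ({s(x,y)} : Finset (Sym2 V)) = {x, y} := by
  ext z; simp [covered, Sym2.mem_iff]

lemma covered_insert (e : Sym2 V) (M : Finset (Sym2 V)) :
    covered (insert e M) = (univ.filter (· ∈ e)) ∪ covered M := by
  ext z; simp [covered]

lemma mem_matchings {M : Finset (Sym2 V)} : M ∈ matchings G ↔ IsMatching G M := by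
  simp [matchings]

lemma empty_mem_matchings : ∅ ∈ matchings G := by
  rw [mem_matchings]; simp [IsMatching]

lemma singleton_mem_matchings {e : Sym2 V} :
    ({e} : Finset (Sym2 V)) ∈ matchings G ↔ e ∈ G.edgeSet := by
  simp only [mem_matchings, IsMatching]
  constructor
  · rintro ⟨h, -⟩; exact h (by simp)
  · intro h
    refine ⟨by simpa using h, ?_⟩
    intro e' he' f hf hne
    simp only [Finset.mem_singleton] at he' hf
    exact absurd (he'.trans hf.symm) hne

lemma covered_subset_of_not_mem {M : Finset (Sym2 V)} {w : V} (h : w ∉ covered M) :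
    covered M ⊆ univ.erase w := by
  intro x hx
  exact Finset.mem_erase.2 ⟨fun hxw => h (hxw ▸ hx), Finset.mem_univ x⟩

lemma card_covered {M : Finset (Sym2 V)} (hM : M ∈ matchings G) :
    (covered M).card = 2 * M.card := by
  rw [mem_matchings] at hM
  have hbi : covered M = M.biUnion (fun e => univ.filter (· ∈ e)) := by
    ext z; simp [covered]
  rw [hbi, Finset.card_biUnion, Finset.card_eq_sum_ones M, Finset.mul_sum]
  · refine Finset.sum_congr rfl fun e he => ?_
    have hee : e ∈ G.edgeSet := hM.1 he
    induction e with
    | _ x y =>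
      have hxy : x ≠ y := G.ne_of_adj ((SimpleGraph.mem_edgeSet G).1 hee)
      have : (univ.filter (· ∈ s(x,y))) = ({x, y} : Finset V) := by
        ext z; simp [Sym2.mem_iff]
      rw [this, Finset.card_insert_of_notMem (by simpa using hxy), Finset.card_singleton]
      norm_num

  · intro e he f hf hef
    simp only [Finset.disjoint_left, Finset.mem_filter]
    rintro x ⟨-, hxe⟩ ⟨-, hxf⟩
    exact hM.2 e he f hf hef x hxe hxf

lemma two_le_card_covered {M : Finset (Sym2 V)} (hM : M ∈ matchings G) (hne : M ≠ ∅) :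
    2 ≤ (covered M).card := by
  rw [card_covered G hM]
  have : 0 < M.card := Finset.card_pos.2 (Finset.nonempty_iff_ne_empty.2 hne)
  omega

variable {u v : V}

lemma addEdge_adj (huv : u ≠ v) {x y : V} :
    (addEdge G u v).Adj x y ↔ G.Adj x y ∨ (x = u ∧ y = v) ∨ (x = v ∧ y = u) := by
  simp only [addEdge, SimpleGraph.sup_adj, SimpleGraph.fromEdgeSet_adj, Set.mem_singleton_iff,
    Sym2.eq_iff]
  constructor
  · rintro (h | ⟨h1, hne⟩)
    · exact Or.inl h
    · rcases h1 with ⟨rfl, rfl⟩ | ⟨rfl, rfl⟩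
      · exact Or.inr (Or.inl ⟨rfl, rfl⟩)
      · exact Or.inr (Or.inr ⟨rfl, rfl⟩)
  · rintro (h | ⟨rfl, rfl⟩ | ⟨rfl, rfl⟩)
    · exact Or.inl h
    · exact Or.inr ⟨Or.inl ⟨rfl, rfl⟩, huv⟩
    · exact Or.inr ⟨Or.inr ⟨rfl, rfl⟩, huv.symm⟩

lemma edgeSet_addEdge (huv : u ≠ v) :
    (addEdge G u v).edgeSet = G.edgeSet ∪ {s(u,v)} := by
  ext e
  induction e with
  | _ x y =>
    simp only [SimpleGraph.mem_edgeSet, addEdge_adj G huv, Set.mem_union,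
      Set.mem_singleton_iff, Sym2.eq_iff]

lemma deg_addEdge_u (huv : u ≠ v) (hne : ¬ G.Adj u v) :
    deg (addEdge G u v) u = deg G u + 1 := by
  have h1 : (univ.filter fun w => (addEdge G u v).Adj u w)
      = insert v (univ.filter fun w => G.Adj u w) := by
    ext w
    simp only [Finset.mem_filter, Finset.mem_univ, true_and, Finset.mem_insert,
      addEdge_adj G huv, eq_self_iff_true, true_and]
    tauto
  rw [deg, h1, Finset.card_insert_of_notMem (by simp [hne]), deg]

lemma deg_addEdge_other (huv : u ≠ v) {x : V} (hxu : x ≠ u) (hxv : x ≠ v) :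
    deg (addEdge G u v) x = deg G x := by
  rw [deg, deg]
  congr 1
  ext w
  simp only [Finset.mem_filter, Finset.mem_univ, true_and, addEdge_adj G huv]
  constructor
  · rintro (h | ⟨rfl, rfl⟩ | ⟨rfl, rfl⟩)
    · exact h
    · exact absurd rfl hxu
    · exact absurd rfl hxv
  · exact Or.inl

lemma addEdge_comm : addEdge G u v = addEdge G v u := by
  rw [addEdge, addEdge, Sym2.eq_swap]

end Basics

section Generic
variable [Fintype V] (d : V → ℂ) (A : Finset V) (𝓜 : Finset (Finset (Sym2 V)))
  (E₁ : Finset (Sym2 V))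

/-- generic matching-type sum -/
noncomputable def msumP : ℂ[X] :=
  ∑ M ∈ 𝓜, (-1)^M.card * ∏ x ∈ A \ covered M, (X - C (d x))

noncomputable def eA (j : ℕ) : ℂ := ((A.val.map d).esymm j)

lemma eA_one : eA d A 1 = ∑ x ∈ A, d x := by
  rw [eA, esymm_one']
  rfl

lemma prod_padded_coeff {s : Finset V} {k : ℕ} (hk : k ≤ 4) :
    ((∏ x ∈ s, (X - C (d x))) * X^4).coeff (s.card + 4 - k) = (-1)^k * eA d s k := by
  have h1 : (∏ x ∈ s, (X - C (d x))) = ((s.val.map d).map (fun t => X - C t)).prod := by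
    rw [Multiset.map_map, Finset.prod_eq_multiset_prod]
    rfl
  have h2 : Multiset.card (s.val.map d) = s.card := by simp
  rw [h1, ← h2, coeff_prod_X_sub_C_padded _ hk, eA]

lemma monic_PA (s : Finset V) : Monic (∏ x ∈ s, (X - C (d x))) :=
  monic_prod_of_monic _ _ (fun _ _ => monic_X_sub_C _)

lemma natDegree_PA (s : Finset V) : (∏ x ∈ s, (X - C (d x))).natDegree = s.card := by
  rw [natDegree_prod_of_monic _ _ (fun _ _ => monic_X_sub_C _)]
  simp

variable {𝓜 E₁}

lemma msumP_decomp (H0 : ∅ ∈ 𝓜)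
    (H1 : 𝓜.filter (fun M => M.card = 1) = E₁.image (fun e => {e})) :
    msumP d A 𝓜 = (∏ x ∈ A, (X - C (d x)))
      - (∑ e ∈ E₁, ∏ x ∈ A \ covered {e}, (X - C (d x)))
      + ∑ M ∈ 𝓜.filter (fun M => 2 ≤ M.card),
          (-1)^M.card * ∏ x ∈ A \ covered M, (X - C (d x)) := by
  classical
  set f : Finset (Sym2 V) → ℂ[X] :=
    fun M => (-1)^M.card * ∏ x ∈ A \ covered M, (X - C (d x)) with hf
  have hsplit : ∑ M ∈ 𝓜, f M
      = (∑ M ∈ 𝓜.filter (fun M => M.card = 0), f M)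
        + (∑ M ∈ 𝓜.filter (fun M => M.card = 1), f M)
        + (∑ M ∈ 𝓜.filter (fun M => 2 ≤ M.card), f M) := by
    rw [← Finset.sum_filter_add_sum_filter_not 𝓜 (fun M => M.card ≤ 1) f]
    congr 1
    · rw [← Finset.sum_filter_add_sum_filter_not (𝓜.filter (fun M => M.card ≤ 1))
        (fun M => M.card = 0) f, Finset.filter_filter, Finset.filter_filter]
      congr 1
      · apply Finset.sum_congr _ (fun _ _ => rfl)
        apply Finset.filter_congr
        intro M _; constructor
        · rintro ⟨-, h⟩; exact h
        · intro h; omega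
      · apply Finset.sum_congr _ (fun _ _ => rfl)
        apply Finset.filter_congr
        intro M _; constructor
        · rintro ⟨h1, h2⟩; omega
        · intro h; omega
    · apply Finset.sum_congr _ (fun _ _ => rfl)
      apply Finset.filter_congr
      intro M _
      constructor
      · intro h; omega
      · intro h; omega
  have h0 : 𝓜.filter (fun M => M.card = 0) = {∅} := by
    ext M
    simp only [Finset.mem_filter, Finset.card_eq_zero, Finset.mem_singleton]
    exact ⟨fun h => h.2, fun h => ⟨h ▸ H0, h⟩⟩
  have hsum0 : ∑ M ∈ 𝓜.filter (fun M => M.card = 0), f M = ∏ x ∈ A, (X - C (d x)) := by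
    rw [h0, Finset.sum_singleton, hf]
    simp [covered_empty]
  have hsum1 : ∑ M ∈ 𝓜.filter (fun M => M.card = 1), f M
      = - ∑ e ∈ E₁, ∏ x ∈ A \ covered {e}, (X - C (d x)) := by
    rw [H1, Finset.sum_image (fun a _ b _ h => by
      simpa using h)]
    rw [← Finset.sum_neg_distrib]
    refine Finset.sum_congr rfl fun e _ => ?_
    rw [hf]
    simp
  rw [msumP, hsplit, hsum0, hsum1]
  ring

lemma degree_PA (s : Finset V) :
    (∏ x ∈ s, (X - C (d x))).degree = (s.card : WithBot ℕ) := by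
  rw [degree_eq_natDegree (monic_PA d s).ne_zero, natDegree_PA]

lemma term_degree_le (M : Finset (Sym2 V)) :
    ((-1:ℂ[X])^M.card * ∏ x ∈ A \ covered M, (X - C (d x))).degree
      ≤ (((A \ covered M).card : ℕ) : WithBot ℕ) := by
  have hP := degree_PA d (A \ covered M)
  rcases Nat.even_or_odd M.card with h | h
  · rw [h.neg_one_pow, one_mul, hP]
  · rw [h.neg_one_pow, neg_one_mul, degree_neg, hP]

lemma msumP_monic (H0 : ∅ ∈ 𝓜)
    (Hcov : ∀ M ∈ 𝓜, covered M ⊆ A ∧ (covered M).card = 2 * M.card) :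
    (msumP d A 𝓜).Monic ∧ (msumP d A 𝓜).natDegree = A.card := by
  classical
  set f : Finset (Sym2 V) → ℂ[X] :=
    fun M => (-1)^M.card * ∏ x ∈ A \ covered M, (X - C (d x)) with hf
  have hdecomp : msumP d A 𝓜 = (∏ x ∈ A, (X - C (d x))) + ∑ M ∈ 𝓜.erase ∅, f M := by
    rw [msumP, ← Finset.add_sum_erase _ f H0]
    congr 1
    simp [hf, covered_empty]
  have hrest : (∑ M ∈ 𝓜.erase ∅, f M).degree < (A.card : ℕ) := by
    refine lt_of_le_of_lt (degree_sum_le _ _) ?_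
    rw [Finset.sup_lt_iff (by exact WithBot.bot_lt_coe _)]
    intro M hM
    rw [Finset.mem_erase] at hM
    obtain ⟨hsub, hcard⟩ := Hcov M hM.2
    have h2 : 2 ≤ (covered M).card := by
      rw [hcard]
      have : 0 < M.card := Finset.card_pos.2 (Finset.nonempty_iff_ne_empty.2 hM.1)
      omega
    have hle : (A \ covered M).card < A.card := by
      rw [Finset.card_sdiff_of_subset hsub]
      have := Finset.card_le_card hsub
      omega
    exact lt_of_le_of_lt (term_degree_le d A M) (by exact_mod_cast hle)
  have hPdeg := degree_PA d A
  have hlt : (∑ M ∈ 𝓜.erase ∅, f M).degree < (∏ x ∈ A, (X - C (d x))).degree := by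
    rw [hPdeg]; exact hrest
  refine ⟨?_, ?_⟩
  · rw [hdecomp]
    exact (monic_PA d A).add_of_left hlt
  · rw [hdecomp, ← natDegree_PA d A]
    have := degree_add_eq_left_of_degree_lt hlt
    exact natDegree_eq_of_degree_eq this

lemma edge_facts (H1 : 𝓜.filter (fun M => M.card = 1) = E₁.image (fun e => {e}))
    (Hcov : ∀ M ∈ 𝓜, covered M ⊆ A ∧ (covered M).card = 2 * M.card) :
    ∀ e ∈ E₁, covered ({e} : Finset (Sym2 V)) ⊆ A
      ∧ (covered ({e} : Finset (Sym2 V))).card = 2 := by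
  intro e he
  have h1 : ({e} : Finset (Sym2 V)) ∈ 𝓜.filter (fun M => M.card = 1) := by
    rw [H1]; exact Finset.mem_image_of_mem _ he
  have h2 := (Finset.mem_filter.1 h1).1
  obtain ⟨hs, hc⟩ := Hcov _ h2
  exact ⟨hs, by simpa using hc⟩

lemma coeff_edgeterm_high {e : Sym2 V}
    (hf : covered ({e} : Finset (Sym2 V)) ⊆ A ∧ (covered ({e} : Finset (Sym2 V))).card = 2)
    {j : ℕ} (hj : A.card + 3 ≤ j) :
    ((∏ x ∈ A \ covered {e}, (X - C (d x))) * X^4).coeff j = 0 := by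
  have h2A : 2 ≤ A.card := hf.2 ▸ Finset.card_le_card hf.1
  apply coeff_eq_zero_of_degree_lt
  rw [degree_mul, degree_X_pow, degree_PA, Finset.card_sdiff_of_subset hf.1, hf.2]
  rw [show ((A.card - 2 : ℕ) : WithBot ℕ) + (4:ℕ) = ((A.card + 2 : ℕ) : WithBot ℕ) by
    rw [← Nat.cast_add]; congr 1; omega]
  exact_mod_cast (by omega : A.card + 2 < j)

lemma coeff_edgeterm_mid {e : Sym2 V}
    (hf : covered ({e} : Finset (Sym2 V)) ⊆ A ∧ (covered ({e} : Finset (Sym2 V))).card = 2) :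
    ((∏ x ∈ A \ covered {e}, (X - C (d x))) * X^4).coeff (A.card + 2) = 1 := by
  have h2A : 2 ≤ A.card := hf.2 ▸ Finset.card_le_card hf.1
  have hmono : (((∏ x ∈ A \ covered {e}, (X - C (d x))) * X^4)).Monic :=
    (monic_PA d _).mul (monic_X_pow 4)
  have hnd : (((∏ x ∈ A \ covered {e}, (X - C (d x))) * X^4)).natDegree = A.card + 2 := by
    rw [(monic_PA d _).natDegree_mul (monic_X_pow 4), natDegree_PA, natDegree_X_pow,
      Finset.card_sdiff_of_subset hf.1, hf.2]
    omega
  rw [← hnd]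
  exact hmono.coeff_natDegree

lemma coeff_edgeterm_low {e : Sym2 V}
    (hf : covered ({e} : Finset (Sym2 V)) ⊆ A ∧ (covered ({e} : Finset (Sym2 V))).card = 2) :
    ((∏ x ∈ A \ covered {e}, (X - C (d x))) * X^4).coeff (A.card + 1)
      = -(∑ x ∈ A \ covered {e}, d x) := by
  have h2A : 2 ≤ A.card := hf.2 ▸ Finset.card_le_card hf.1
  have := prod_padded_coeff d (s := A \ covered {e}) (k := 1) (by norm_num)
  rw [Finset.card_sdiff_of_subset hf.1, hf.2, show A.card - 2 + 4 - 1 = A.card + 1 by omega] at this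
  rw [this, eA_one]
  ring

lemma coeff_bigterm {M : Finset (Sym2 V)}
    (hs : covered M ⊆ A) (hc : (covered M).card = 2 * M.card) (hM : 2 ≤ M.card)
    {j : ℕ} (hj : A.card + 1 ≤ j) :
    (((-1:ℂ[X])^M.card * ∏ x ∈ A \ covered M, (X - C (d x))) * X^4).coeff j = 0 := by
  have hcA : (covered M).card ≤ A.card := Finset.card_le_card hs
  apply coeff_eq_zero_of_degree_lt
  rw [degree_mul, degree_X_pow]
  calc ((-1:ℂ[X])^M.card * ∏ x ∈ A \ covered M, (X - C (d x))).degree + (4:ℕ)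
      ≤ (((A \ covered M).card : ℕ) : WithBot ℕ) + (4:ℕ) := by
        exact add_le_add_left (term_degree_le d A M) _
    _ = (((A \ covered M).card + 4 : ℕ) : WithBot ℕ) := by rw [← Nat.cast_add]
    _ < (j : WithBot ℕ) := by
        rw [Finset.card_sdiff_of_subset hs]
        exact_mod_cast (by omega : A.card - (covered M).card + 4 < j)

section MainCoeffs
variable (H0 : ∅ ∈ 𝓜)
  (H1 : 𝓜.filter (fun M => M.card = 1) = E₁.image (fun e => {e}))
  (Hcov : ∀ M ∈ 𝓜, covered M ⊆ A ∧ (covered M).card = 2 * M.card)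
include H0 H1 Hcov

lemma msumP_coeff_expand (j : ℕ) (hj : A.card + 1 ≤ j) :
    ((msumP d A 𝓜) * X^4).coeff j
      = ((∏ x ∈ A, (X - C (d x))) * X^4).coeff j
        - ∑ e ∈ E₁, ((∏ x ∈ A \ covered {e}, (X - C (d x))) * X^4).coeff j := by
  rw [msumP_decomp d A H0 H1, add_mul, sub_mul, coeff_add, coeff_sub, Finset.sum_mul,
    Polynomial.finset_sum_coeff, Finset.sum_mul, Polynomial.finset_sum_coeff]
  have hbig : ∑ M ∈ 𝓜.filter (fun M => 2 ≤ M.card),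
      (((-1:ℂ[X])^M.card * ∏ x ∈ A \ covered M, (X - C (d x))) * X^4).coeff j = 0 := by
    refine Finset.sum_eq_zero fun M hM => ?_
    obtain ⟨hm, h2⟩ := Finset.mem_filter.1 hM
    obtain ⟨hs, hc⟩ := Hcov M hm
    exact coeff_bigterm d A hs hc h2 hj
  rw [hbig, add_zero]

lemma msumP_coeff0 : ((msumP d A 𝓜) * X^4).coeff (A.card + 4) = 1 := by
  rw [msumP_coeff_expand d A H0 H1 Hcov _ (by omega)]
  have h1 := prod_padded_coeff d (s := A) (k := 0) (by norm_num)
  rw [show A.card + 4 - 0 = A.card + 4 by omega] at h1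
  rw [h1, eA, esymm_zero']
  have h2 : ∑ e ∈ E₁, ((∏ x ∈ A \ covered {e}, (X - C (d x))) * X^4).coeff (A.card + 4)
      = 0 := by
    refine Finset.sum_eq_zero fun e he => ?_
    exact coeff_edgeterm_high d A (edge_facts A H1 Hcov e he) (by omega)
  rw [h2]
  ring

lemma msumP_coeff1 : ((msumP d A 𝓜) * X^4).coeff (A.card + 3) = -(∑ x ∈ A, d x) := by
  rw [msumP_coeff_expand d A H0 H1 Hcov _ (by omega)]
  have h1 := prod_padded_coeff d (s := A) (k := 1) (by norm_num)
  rw [show A.card + 4 - 1 = A.card + 3 by omega] at h1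
  rw [h1, eA_one]
  have h2 : ∑ e ∈ E₁, ((∏ x ∈ A \ covered {e}, (X - C (d x))) * X^4).coeff (A.card + 3)
      = 0 := by
    refine Finset.sum_eq_zero fun e he => ?_
    exact coeff_edgeterm_high d A (edge_facts A H1 Hcov e he) (by omega)
  rw [h2]
  ring

lemma msumP_coeff2 :
    ((msumP d A 𝓜) * X^4).coeff (A.card + 2) = eA d A 2 - E₁.card := by
  rw [msumP_coeff_expand d A H0 H1 Hcov _ (by omega)]
  have h1 := prod_padded_coeff d (s := A) (k := 2) (by norm_num)
  rw [show A.card + 4 - 2 = A.card + 2 by omega] at h1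
  rw [h1]
  have h2 : ∑ e ∈ E₁, ((∏ x ∈ A \ covered {e}, (X - C (d x))) * X^4).coeff (A.card + 2)
      = (E₁.card : ℂ) := by
    rw [Finset.sum_congr rfl fun e he => coeff_edgeterm_mid d A (edge_facts A H1 Hcov e he)]
    simp
  rw [h2]
  ring

lemma msumP_coeff3 :
    ((msumP d A 𝓜) * X^4).coeff (A.card + 1)
      = -(eA d A 3) + ∑ e ∈ E₁, ∑ x ∈ A \ covered {e}, d x := by
  rw [msumP_coeff_expand d A H0 H1 Hcov _ (by omega)]
  have h1 := prod_padded_coeff d (s := A) (k := 3) (by norm_num)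
  rw [show A.card + 4 - 3 = A.card + 1 by omega] at h1
  rw [h1]
  have h2 : ∑ e ∈ E₁, ((∏ x ∈ A \ covered {e}, (X - C (d x))) * X^4).coeff (A.card + 1)
      = -∑ e ∈ E₁, ∑ x ∈ A \ covered {e}, d x := by
    rw [Finset.sum_congr rfl fun e he => coeff_edgeterm_low d A (edge_facts A H1 Hcov e he)]
    rw [Finset.sum_neg_distrib]
  rw [h2]
  ring

end MainCoeffs

end Generic

/-! ### Power sums of roots via coefficients -/

lemma roots_esymm_eq (p : ℂ[X]) (hm : p.Monic) {k : ℕ} (hk : k ≤ 4) :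
    p.roots.esymm k = (-1)^k * (p * X^4).coeff (p.natDegree + 4 - k) := by
  have hsplits : p.Splits := IsAlgClosed.splits p
  have hcard : Multiset.card p.roots = p.natDegree := (splits_iff_card_roots).1 hsplits
  have hprod : (p.roots.map (fun a => X - C a)).prod = p :=
    prod_multiset_X_sub_C_of_monic_of_roots_card_eq hm hcard
  have h := coeff_prod_X_sub_C_padded p.roots hk
  rw [hprod, hcard] at h
  rw [h, ← mul_assoc, ← pow_add, Even.neg_one_pow ⟨k, by ring⟩, one_mul]

lemma psum4_of_monic (p : ℂ[X]) (hm : p.Monic) :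
    ((p.roots).map (· ^ 4)).sum =
      ((p * X^4).coeff (p.natDegree + 3))^4
        - 4*((p * X^4).coeff (p.natDegree + 3))^2 * ((p * X^4).coeff (p.natDegree + 2))
        + 2*((p * X^4).coeff (p.natDegree + 2))^2
        + 4*((p * X^4).coeff (p.natDegree + 3)) * ((p * X^4).coeff (p.natDegree + 1))
        - 4*((p * X^4).coeff p.natDegree) := by
  have e1 : p.roots.esymm 1 = -(p * X^4).coeff (p.natDegree + 3) := by
    have := roots_esymm_eq p hm (k := 1) (by norm_num)
    rw [show p.natDegree + 4 - 1 = p.natDegree + 3 by omega] at this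
    rw [this]; norm_num
  have e2 : p.roots.esymm 2 = (p * X^4).coeff (p.natDegree + 2) := by
    have := roots_esymm_eq p hm (k := 2) (by norm_num)
    rw [show p.natDegree + 4 - 2 = p.natDegree + 2 by omega] at this
    rw [this]; norm_num
  have e3 : p.roots.esymm 3 = -(p * X^4).coeff (p.natDegree + 1) := by
    have := roots_esymm_eq p hm (k := 3) (by norm_num)
    rw [show p.natDegree + 4 - 3 = p.natDegree + 1 by omega] at this
    rw [this]; norm_num
  have e4 : p.roots.esymm 4 = (p * X^4).coeff p.natDegree := by
    have := roots_esymm_eq p hm (k := 4) (by norm_num)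
    rw [show p.natDegree + 4 - 4 = p.natDegree by omega] at this
    rw [this]; norm_num
  rw [newton4, e1, e2, e3, e4]
  ring

/-! ### Instantiation for graphs -/

section Graph
variable [Fintype V] (G : SimpleGraph V)

lemma LM_eq_msumP : LM ℂ G = msumP (fun x => (deg G x : ℂ)) univ (matchings G) := rfl

/-- The vertex-deleted auxiliary polynomial `N_w`. -/
noncomputable def Nw (w : V) : ℂ[X] :=
  msumP (fun x => (deg G x : ℂ)) (univ.erase w)
    ((matchings G).filter (fun M => w ∉ covered M))

lemma LM_H1 : (matchings G).filter (fun M => M.card = 1)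
    = (edges G).image (fun e => {e}) := by
  ext M
  simp only [Finset.mem_filter, Finset.mem_image, Finset.card_eq_one]
  constructor
  · rintro ⟨hm, e, rfl⟩
    exact ⟨e, mem_edges G |>.2 ((singleton_mem_matchings G).1 hm), rfl⟩
  · rintro ⟨e, he, rfl⟩
    exact ⟨(singleton_mem_matchings G).2 ((mem_edges G).1 he), e, rfl⟩

lemma LM_Hcov : ∀ M ∈ matchings G, covered M ⊆ (univ : Finset V)
    ∧ (covered M).card = 2 * M.card :=
  fun M hM => ⟨Finset.subset_univ _, card_covered G hM⟩

lemma Nw_H0 (w : V) : ∅ ∈ (matchings G).filter (fun M => w ∉ covered M) := by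
  rw [Finset.mem_filter]
  exact ⟨empty_mem_matchings G, by simp [covered_empty]⟩

lemma Nw_H1 (w : V) : ((matchings G).filter (fun M => w ∉ covered M)).filter
      (fun M => M.card = 1)
    = ((edges G).filter (fun e => w ∉ e)).image (fun e => {e}) := by
  ext M
  simp only [Finset.mem_filter, Finset.mem_image, Finset.card_eq_one]
  constructor
  · rintro ⟨⟨hm, hw⟩, e, rfl⟩
    refine ⟨e, ⟨mem_edges G |>.2 ((singleton_mem_matchings G).1 hm), ?_⟩, rfl⟩
    intro hwe
    exact hw ((mem_covered).2 ⟨e, Finset.mem_singleton_self e, hwe⟩)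
  · rintro ⟨e, ⟨he, hwe⟩, rfl⟩
    refine ⟨⟨(singleton_mem_matchings G).2 ((mem_edges G).1 he), ?_⟩, e, rfl⟩
    intro hc
    obtain ⟨f, hf, hwf⟩ := (mem_covered).1 hc
    rw [Finset.mem_singleton] at hf
    exact hwe (hf ▸ hwf)

lemma Nw_Hcov (w : V) : ∀ M ∈ (matchings G).filter (fun M => w ∉ covered M),
    covered M ⊆ univ.erase w ∧ (covered M).card = 2 * M.card := by
  intro M hM
  obtain ⟨hm, hw⟩ := Finset.mem_filter.1 hM
  exact ⟨covered_subset_of_not_mem hw, card_covered G hm⟩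

lemma LM_monic : (LM ℂ G).Monic ∧ (LM ℂ G).natDegree = Fintype.card V := by
  rw [LM_eq_msumP]
  have := msumP_monic (fun x => (deg G x : ℂ)) univ (empty_mem_matchings G) (LM_Hcov G)
  simpa using this

end Graph

/-! ### The edge-addition identity -/

section AddEdge
variable [Fintype V] (G : SimpleGraph V) (u v : V)

lemma erase_sdiff_comm' (s : Finset V) (w : V) (cov : Finset V) :
    (s \ cov).erase w = (s.erase w) \ cov := by
  ext x
  simp only [Finset.mem_erase, Finset.mem_sdiff]
  tauto

lemma filter_mem_pair (huv : u ≠ v) :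
    (univ.filter (· ∈ s(u,v))) = ({u, v} : Finset V) := by
  ext z; simp [Sym2.mem_iff]

lemma covered_insert_pair (huv : u ≠ v) (M : Finset (Sym2 V)) :
    covered (insert (s(u,v)) M) = insert u (insert v (covered M)) := by
  rw [covered_insert, filter_mem_pair u v huv]
  ext x
  simp only [Finset.mem_union, Finset.mem_insert, Finset.mem_singleton]
  tauto

lemma matchings_addEdge (huv : u ≠ v) (hne : ¬ G.Adj u v) :
    matchings (addEdge G u v)
      = matchings G
        ∪ ((matchings G).filter (fun M => u ∉ covered M ∧ v ∉ covered M)).image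
            (insert (s(u,v))) := by
  have he₀ : s(u,v) ∉ G.edgeSet := fun h => hne ((SimpleGraph.mem_edgeSet G).1 h)
  have hedge := edgeSet_addEdge G huv
  ext M'
  simp only [Finset.mem_union, Finset.mem_image, Finset.mem_filter, mem_matchings]
  constructor
  · intro hM'
    by_cases h0 : s(u,v) ∈ M'
    · right
      refine ⟨M'.erase (s(u,v)), ⟨⟨?_, ?_⟩, ?_, ?_⟩, Finset.insert_erase h0⟩
      · intro e he
        have heM : e ∈ M' := Finset.mem_of_mem_erase (by exact_mod_cast he)
        have hene : e ≠ s(u,v) := Finset.ne_of_mem_erase (by exact_mod_cast he)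
        have := hM'.1 heM
        rw [hedge] at this
        rcases this with h | h
        · exact h
        · exact absurd (Set.mem_singleton_iff.1 h) hene
      · intro e he f hf hef
        exact hM'.2 e (Finset.mem_of_mem_erase he) f (Finset.mem_of_mem_erase hf) hef
      · intro hu
        obtain ⟨e, he, hue⟩ := (mem_covered).1 hu
        exact hM'.2 (s(u,v)) h0 e (Finset.mem_of_mem_erase he)
          (Ne.symm (Finset.ne_of_mem_erase he)) u (by simp) hue
      · intro hv
        obtain ⟨e, he, hve⟩ := (mem_covered).1 hv
        exact hM'.2 (s(u,v)) h0 e (Finset.mem_of_mem_erase he)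
          (Ne.symm (Finset.ne_of_mem_erase he)) v (by simp) hve
    · left
      refine ⟨?_, hM'.2⟩
      intro e he
      have := hM'.1 he
      rw [hedge] at this
      rcases this with h | h
      · exact h
      · exact absurd (Set.mem_singleton_iff.1 h ▸ he) h0
  · rintro (hM | ⟨M, ⟨hM, hu, hv⟩, rfl⟩)
    · refine ⟨?_, hM.2⟩
      intro e he
      rw [hedge]
      exact Or.inl (hM.1 he)
    · constructor
      · intro e he
        rw [Finset.coe_insert, Set.mem_insert_iff] at he
        rw [hedge]
        rcases he with rfl | he
        · exact Or.inr rfl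
        · exact Or.inl (hM.1 he)
      · intro e he f hf hef x hxe
        rw [Finset.mem_insert] at he hf
        rcases he with rfl | he <;> rcases hf with rfl | hf
        · exact absurd rfl hef
        · intro hxf
          rcases (Sym2.mem_iff).1 hxe with rfl | rfl
          · exact hu ((mem_covered).2 ⟨f, hf, hxf⟩)
          · exact hv ((mem_covered).2 ⟨f, hf, hxf⟩)
        · intro hxf
          rcases (Sym2.mem_iff).1 hxf with rfl | rfl
          · exact hu ((mem_covered).2 ⟨e, he, hxe⟩)
          · exact hv ((mem_covered).2 ⟨e, he, hxe⟩)
        · exact hM.2 e he f hf hef x hxe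

lemma deg_addEdge_v (huv : u ≠ v) (hne : ¬ G.Adj u v) :
    deg (addEdge G u v) v = deg G v + 1 := by
  rw [addEdge_comm]
  exact deg_addEdge_u G huv.symm (fun h => hne h.symm)

lemma term_addEdge (huv : u ≠ v) (hne : ¬ G.Adj u v) (M : Finset (Sym2 V)) :
    (∏ x ∈ univ \ covered M, (X - C ((deg (addEdge G u v) x : ℂ))))
      = (∏ x ∈ univ \ covered M, (X - C ((deg G x : ℂ))))
        - (if u ∈ covered M then 0
            else ∏ x ∈ (univ.erase u) \ covered M, (X - C ((deg G x : ℂ))))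
        - (if v ∈ covered M then 0
            else ∏ x ∈ (univ.erase v) \ covered M, (X - C ((deg G x : ℂ))))
        + (if u ∈ covered M ∨ v ∈ covered M then 0
            else ∏ x ∈ ((univ.erase u).erase v) \ covered M, (X - C ((deg G x : ℂ)))) := by
  classical
  set cov := covered M with hcov
  set d : V → ℂ[X] := fun x => X - C ((deg G x : ℂ)) with hd
  set d' : V → ℂ[X] := fun x => X - C ((deg (addEdge G u v) x : ℂ)) with hd'
  have hdu : d' u = d u - 1 := by
    simp only [hd', hd]
    rw [deg_addEdge_u G huv hne]
    push_cast
    rw [map_add, map_one]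
    ring
  have hdv : d' v = d v - 1 := by
    simp only [hd', hd]
    rw [deg_addEdge_v G u v huv hne]
    push_cast
    rw [map_add, map_one]
    ring
  have hdx : ∀ x, x ≠ u → x ≠ v → d' x = d x := by
    intro x hxu hxv
    simp only [hd', hd]
    rw [deg_addEdge_other G huv hxu hxv]
  by_cases hu : u ∈ cov <;> by_cases hv : v ∈ cov
  · -- both covered
    rw [if_pos hu, if_pos hv, if_pos (Or.inl hu : u ∈ cov ∨ v ∈ cov)]
    have : ∀ x ∈ univ \ cov, d' x = d x := by
      intro x hx
      rw [Finset.mem_sdiff] at hx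
      exact hdx x (fun h => hx.2 (by rw [h]; exact hu)) (fun h => hx.2 (by rw [h]; exact hv))
    rw [Finset.prod_congr rfl this]
    ring
  · -- u covered, v not
    rw [if_pos hu, if_neg hv, if_pos (Or.inl hu : u ∈ cov ∨ v ∈ cov)]
    have hvS : v ∈ univ \ cov := Finset.mem_sdiff.2 ⟨Finset.mem_univ v, hv⟩
    have hrw : (univ \ cov).erase v = (univ.erase v) \ cov := erase_sdiff_comm' univ v cov
    have hrest : ∀ x ∈ (univ \ cov).erase v, d' x = d x := by
      intro x hx
      rw [Finset.mem_erase, Finset.mem_sdiff] at hx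
      exact hdx x (fun h => hx.2.2 (by rw [h]; exact hu)) hx.1
    rw [← Finset.mul_prod_erase _ d' hvS, ← Finset.mul_prod_erase _ d hvS,
      Finset.prod_congr rfl hrest, hdv, hrw]
    ring
  · -- v covered, u not
    rw [if_neg hu, if_pos hv, if_pos (Or.inr hv : u ∈ cov ∨ v ∈ cov)]
    have huS : u ∈ univ \ cov := Finset.mem_sdiff.2 ⟨Finset.mem_univ u, hu⟩
    have hrw : (univ \ cov).erase u = (univ.erase u) \ cov := erase_sdiff_comm' univ u cov
    have hrest : ∀ x ∈ (univ \ cov).erase u, d' x = d x := by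
      intro x hx
      rw [Finset.mem_erase, Finset.mem_sdiff] at hx
      exact hdx x hx.1 (fun h => hx.2.2 (by rw [h]; exact hv))
    rw [← Finset.mul_prod_erase _ d' huS, ← Finset.mul_prod_erase _ d huS,
      Finset.prod_congr rfl hrest, hdu, hrw]
    ring
  · -- neither covered
    rw [if_neg hu, if_neg hv, if_neg (by tauto : ¬(u ∈ cov ∨ v ∈ cov))]
    have huS : u ∈ univ \ cov := Finset.mem_sdiff.2 ⟨Finset.mem_univ u, hu⟩
    have hvS : v ∈ (univ \ cov).erase u := Finset.mem_erase.2 ⟨huv.symm, Finset.mem_sdiff.2 ⟨Finset.mem_univ v, hv⟩⟩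
    have hvS' : v ∈ (univ.erase u) \ cov := by
      rw [← erase_sdiff_comm' univ u cov]; exact hvS
    have huS' : u ∈ (univ.erase v) \ cov := by
      rw [← erase_sdiff_comm' univ v cov]
      exact Finset.mem_erase.2 ⟨huv, huS⟩
    have hrw2 : ((univ \ cov).erase u).erase v = ((univ.erase u).erase v) \ cov := by
      rw [erase_sdiff_comm' univ u cov, erase_sdiff_comm' (univ.erase u) v cov]
    have hrest : ∀ x ∈ ((univ \ cov).erase u).erase v, d' x = d x := by
      intro x hx
      rw [Finset.mem_erase, Finset.mem_erase] at hx
      exact hdx x hx.2.1 hx.1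
    have e1 : (∏ x ∈ univ \ cov, d' x)
        = d' u * (d' v * ∏ x ∈ ((univ \ cov).erase u).erase v, d x) := by
      rw [← Finset.mul_prod_erase _ d' huS, ← Finset.mul_prod_erase _ d' hvS,
        Finset.prod_congr rfl hrest]
    have e2 : (∏ x ∈ univ \ cov, d x)
        = d u * (d v * ∏ x ∈ ((univ \ cov).erase u).erase v, d x) := by
      rw [← Finset.mul_prod_erase _ d huS, ← Finset.mul_prod_erase _ d hvS]
    have e3 : (∏ x ∈ (univ.erase u) \ cov, d x)
        = d v * ∏ x ∈ ((univ \ cov).erase u).erase v, d x := by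
      rw [← Finset.mul_prod_erase _ d hvS', hrw2, erase_sdiff_comm' (univ.erase u) v cov]
    have e4 : (∏ x ∈ (univ.erase v) \ cov, d x)
        = d u * ∏ x ∈ ((univ \ cov).erase u).erase v, d x := by
      rw [← Finset.mul_prod_erase _ d huS']
      congr 1
      rw [hrw2, erase_sdiff_comm' (univ.erase v) u cov]
      congr 1
      ext x
      simp only [Finset.mem_sdiff, Finset.mem_erase, Finset.mem_univ]
      tauto
    rw [e1, e2, e3, e4, hrw2, hdu, hdv]
    ring

lemma not_mem_matching_edge (huv : u ≠ v) (hne : ¬ G.Adj u v) {M : Finset (Sym2 V)}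
    (hM : M ∈ matchings G) : s(u,v) ∉ M := by
  intro hk
  exact hne ((SimpleGraph.mem_edgeSet G).1 (((mem_matchings G).1 hM).1 hk))

lemma LM_addEdge (huv : u ≠ v) (hne : ¬ G.Adj u v) :
    LM ℂ (addEdge G u v) = LM ℂ G - Nw G u - Nw G v := by
  classical
  set dd : V → ℂ := fun x => (deg G x : ℂ) with hdd
  set filterUV := (matchings G).filter (fun M => u ∉ covered M ∧ v ∉ covered M) with hfUV
  set W : ℂ[X] := ∑ M ∈ filterUV,
      (-1)^M.card * ∏ x ∈ ((univ.erase u).erase v) \ covered M, (X - C (dd x)) with hW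
  have hdisj : Disjoint (matchings G) (filterUV.image (insert (s(u,v)))) := by
    rw [Finset.disjoint_right]
    rintro M hM hM'
    obtain ⟨M₀, hM₀, rfl⟩ := Finset.mem_image.1 hM
    exact not_mem_matching_edge G u v huv hne hM' (Finset.mem_insert_self _ _)
  have hinj : ∀ M₁ ∈ filterUV, ∀ M₂ ∈ filterUV,
      insert (s(u,v)) M₁ = insert (s(u,v)) M₂ → M₁ = M₂ := by
    intro M₁ h₁ M₂ h₂ h
    have k₁ := not_mem_matching_edge G u v huv hne (Finset.mem_filter.1 h₁).1
    have k₂ := not_mem_matching_edge G u v huv hne (Finset.mem_filter.1 h₂).1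
    rw [← Finset.erase_insert k₁, ← Finset.erase_insert k₂, h]
  have hunfold : LM ℂ (addEdge G u v)
      = ∑ M ∈ matchings (addEdge G u v),
          (-1)^M.card * ∏ x ∈ univ \ covered M, (X - C ((deg (addEdge G u v) x : ℂ))) := rfl
  rw [hunfold, matchings_addEdge G u v huv hne, Finset.sum_union hdisj,
    Finset.sum_image hinj]
  have hterm : ∀ M ∈ matchings G,
      (-1:ℂ[X])^M.card * ∏ x ∈ univ \ covered M, (X - C ((deg (addEdge G u v) x : ℂ)))
        = (-1)^M.card * ∏ x ∈ univ \ covered M, (X - C (dd x))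
          - (if u ∉ covered M then
              (-1)^M.card * ∏ x ∈ (univ.erase u) \ covered M, (X - C (dd x)) else 0)
          - (if v ∉ covered M then
              (-1)^M.card * ∏ x ∈ (univ.erase v) \ covered M, (X - C (dd x)) else 0)
          + (if u ∉ covered M ∧ v ∉ covered M then
              (-1)^M.card * ∏ x ∈ ((univ.erase u).erase v) \ covered M, (X - C (dd x))
             else 0) := by
    intro M _
    rw [term_addEdge G u v huv hne M]
    by_cases hu : u ∈ covered M <;> by_cases hv : v ∈ covered M
    · rw [if_pos hu, if_pos hv, if_pos (Or.inl hu : u ∈ covered M ∨ v ∈ covered M),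
        if_neg (not_not_intro hu), if_neg (not_not_intro hv),
        if_neg (fun h => h.1 hu : ¬(u ∉ covered M ∧ v ∉ covered M))]
      ring
    · rw [if_pos hu, if_neg hv, if_pos (Or.inl hu : u ∈ covered M ∨ v ∈ covered M),
        if_neg (not_not_intro hu), if_pos hv,
        if_neg (fun h => h.1 hu : ¬(u ∉ covered M ∧ v ∉ covered M))]
      ring
    · rw [if_neg hu, if_pos hv, if_pos (Or.inr hv : u ∈ covered M ∨ v ∈ covered M),
        if_pos hu, if_neg (not_not_intro hv),
        if_neg (fun h => h.2 hv : ¬(u ∉ covered M ∧ v ∉ covered M))]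
      ring
    · rw [if_neg hu, if_neg hv, if_neg (by tauto : ¬(u ∈ covered M ∨ v ∈ covered M)),
        if_pos hu, if_pos hv, if_pos (⟨hu, hv⟩ : u ∉ covered M ∧ v ∉ covered M)]
      ring
  rw [Finset.sum_congr rfl hterm]
  rw [Finset.sum_add_distrib, Finset.sum_sub_distrib, Finset.sum_sub_distrib]
  rw [← Finset.sum_filter, ← Finset.sum_filter, ← Finset.sum_filter]
  have hLM : ∑ M ∈ matchings G, (-1:ℂ[X])^M.card * ∏ x ∈ univ \ covered M, (X - C (dd x))
      = LM ℂ G := rfl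
  have hNu : ∑ M ∈ (matchings G).filter (fun M => u ∉ covered M),
      (-1:ℂ[X])^M.card * ∏ x ∈ (univ.erase u) \ covered M, (X - C (dd x)) = Nw G u := rfl
  have hNv : ∑ M ∈ (matchings G).filter (fun M => v ∉ covered M),
      (-1:ℂ[X])^M.card * ∏ x ∈ (univ.erase v) \ covered M, (X - C (dd x)) = Nw G v := rfl
  have hWW : ∑ M ∈ (matchings G).filter (fun M => u ∉ covered M ∧ v ∉ covered M),
      (-1:ℂ[X])^M.card * ∏ x ∈ ((univ.erase u).erase v) \ covered M, (X - C (dd x)) = W := by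
    rw [hW, hfUV]
  have hsecond : ∑ M ∈ filterUV,
      (-1:ℂ[X])^((insert (s(u,v)) M).card)
        * ∏ x ∈ univ \ covered (insert (s(u,v)) M), (X - C ((deg (addEdge G u v) x : ℂ)))
      = -W := by
    rw [hW, ← Finset.sum_neg_distrib]
    refine Finset.sum_congr rfl fun M hM => ?_
    have hm : M ∈ matchings G := (Finset.mem_filter.1 hM).1
    have hnm : s(u,v) ∉ M := not_mem_matching_edge G u v huv hne hm
    have hset : univ \ covered (insert (s(u,v)) M)
        = ((univ.erase u).erase v) \ covered M := by
      rw [covered_insert_pair u v huv M]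
      ext x
      simp only [Finset.mem_sdiff, Finset.mem_univ, true_and, Finset.mem_insert,
        Finset.mem_erase]
      tauto
    have hdeg : ∀ x ∈ ((univ.erase u).erase v) \ covered M,
        (X - C ((deg (addEdge G u v) x : ℂ))) = (X - C (dd x)) := by
      intro x hx
      rw [Finset.mem_sdiff, Finset.mem_erase, Finset.mem_erase] at hx
      rw [hdd]
      rw [deg_addEdge_other G huv hx.1.2.1 hx.1.1]
    rw [Finset.card_insert_of_notMem hnm, hset, Finset.prod_congr rfl hdeg, pow_succ]
    ring
  rw [hLM, hNu, hNv, hWW, hsecond]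
  ring

end AddEdge

/-! ### Incidence and handshake lemmas -/

section Handshake
variable [Fintype V] (G : SimpleGraph V)

lemma incidence_image (w : V) :
    (edges G).filter (fun e => w ∈ e) = (univ.filter (G.Adj w)).image (fun x => s(w,x)) := by
  ext e
  simp only [Finset.mem_filter, Finset.mem_image, Finset.mem_univ, true_and, mem_edges]
  constructor
  · rintro ⟨he, hwe⟩
    induction e with
    | _ a b =>
      rcases (Sym2.mem_iff).1 hwe with rfl | rfl
      · exact ⟨b, (SimpleGraph.mem_edgeSet G).1 he, rfl⟩
      · exact ⟨a, (SimpleGraph.mem_edgeSet G).1 (Sym2.eq_swap ▸ he), Sym2.eq_swap⟩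
  · rintro ⟨x, hx, rfl⟩
    exact ⟨(SimpleGraph.mem_edgeSet G).2 hx, by simp⟩

lemma mk_left_injOn (w : V) : ∀ x ∈ univ.filter (G.Adj w), ∀ y ∈ univ.filter (G.Adj w),
    s(w,x) = s(w,y) → x = y := by
  intro x _ y _ h
  rcases (Sym2.eq_iff).1 h with ⟨-, h2⟩ | ⟨h1, h2⟩
  · exact h2
  · exact h2.trans h1

lemma card_incidence (w : V) : ((edges G).filter (fun e => w ∈ e)).card = deg G w := by
  rw [incidence_image, deg, Finset.card_image_of_injOn (mk_left_injOn G w)]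

lemma sum_incidence (w : V) (F : Sym2 V → ℂ) :
    ∑ e ∈ (edges G).filter (fun e => w ∈ e), F e
      = ∑ x ∈ univ.filter (G.Adj w), F s(w,x) := by
  rw [incidence_image, Finset.sum_image (mk_left_injOn G w)]

lemma covered_singleton_sum (f : V → ℂ) {x y : V} (hxy : x ≠ y) :
    ∑ z ∈ covered ({s(x,y)} : Finset (Sym2 V)), f z = f x + f y := by
  rw [covered_pair, Finset.sum_insert (by simpa using hxy), Finset.sum_singleton]

lemma handshake (f : V → ℂ) :
    ∑ e ∈ edges G, ∑ x ∈ covered ({e} : Finset (Sym2 V)), f x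
      = ∑ x : V, (deg G x : ℂ) * f x := by
  have h1 : ∀ e ∈ edges G, ∑ x ∈ covered ({e} : Finset (Sym2 V)), f x
      = ∑ x : V, if x ∈ e then f x else 0 := by
    intro e _
    have : covered ({e} : Finset (Sym2 V)) = univ.filter (· ∈ e) := by
      ext z; simp [covered]
    rw [this, Finset.sum_filter]
  rw [Finset.sum_congr rfl h1, Finset.sum_comm]
  refine Finset.sum_congr rfl fun x _ => ?_
  rw [← Finset.sum_filter, Finset.sum_const, ← card_incidence G x]
  rw [nsmul_eq_mul]

lemma sum_incident_cov (w : V) (f : V → ℂ) :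
    ∑ e ∈ (edges G).filter (fun e => w ∈ e), ∑ x ∈ covered ({e} : Finset (Sym2 V)), f x
      = (deg G w : ℂ) * f w + ∑ x ∈ univ.filter (G.Adj w), f x := by
  rw [sum_incidence]
  have h1 : ∀ x ∈ univ.filter (G.Adj w),
      ∑ z ∈ covered ({s(w,x)} : Finset (Sym2 V)), f z = f w + f x := by
    intro x hx
    exact covered_singleton_sum f (G.ne_of_adj (by simpa using hx))
  rw [Finset.sum_congr rfl h1, Finset.sum_add_distrib, Finset.sum_const, nsmul_eq_mul, deg]

lemma card_edges_not_incident (w : V) :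
    ((edges G).filter (fun e => w ∉ e)).card = (edges G).card - deg G w := by
  have := Finset.card_filter_add_card_filter_not (s := edges G)
    (p := fun e => w ∈ e)
  rw [card_incidence] at this
  omega

lemma sum_not_incident_cov (w : V) (f : V → ℂ) :
    ∑ e ∈ (edges G).filter (fun e => w ∉ e), ∑ x ∈ covered ({e} : Finset (Sym2 V)), f x
      = (∑ x : V, (deg G x : ℂ) * f x)
        - ((deg G w : ℂ) * f w + ∑ x ∈ univ.filter (G.Adj w), f x) := by
  have := Finset.sum_filter_add_sum_filter_not (edges G) (fun e => w ∈ e)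
    (fun e => ∑ x ∈ covered ({e} : Finset (Sym2 V)), f x)
  rw [sum_incident_cov, handshake] at this
  rw [← this]
  ring

end Handshake

/-! ### Explicit coefficient values for `LM` and `Nw` -/

section GraphCoeffValues
variable [Fintype V] (G : SimpleGraph V)

lemma eA_two (f : V → ℂ) (s : Finset V) :
    eA f s 2 = ((∑ x ∈ s, f x)^2 - ∑ x ∈ s, (f x)^2)/2 := by
  rw [eA, esymm2_eq]
  have h1 : (s.val.map f).sum = ∑ x ∈ s, f x := rfl
  have h2 : ((s.val.map f).map (·^2)).sum = ∑ x ∈ s, (f x)^2 := by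
    rw [Multiset.map_map]; rfl
  rw [h1, h2]

lemma eA_three (f : V → ℂ) (s : Finset V) :
    eA f s 3 = ((∑ x ∈ s, f x)^3 - 3*(∑ x ∈ s, f x)*(∑ x ∈ s, (f x)^2)
      + 2*(∑ x ∈ s, (f x)^3))/6 := by
  rw [eA, esymm3_eq]
  have h1 : (s.val.map f).sum = ∑ x ∈ s, f x := rfl
  have h2 : ((s.val.map f).map (·^2)).sum = ∑ x ∈ s, (f x)^2 := by
    rw [Multiset.map_map]; rfl
  have h3 : ((s.val.map f).map (·^3)).sum = ∑ x ∈ s, (f x)^3 := by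
    rw [Multiset.map_map]; rfl
  rw [h1, h2, h3]

lemma handshake' :
    ∑ e ∈ edges G, ∑ x ∈ covered ({e} : Finset (Sym2 V)), (deg G x : ℂ)
      = ∑ x : V, (deg G x : ℂ)^2 := by
  rw [handshake G (fun x => (deg G x : ℂ))]
  exact Finset.sum_congr rfl fun x _ => (sq ((deg G x : ℂ))).symm

lemma LM_coeff1 :
    (LM ℂ G * X^4).coeff (Fintype.card V + 3) = -(∑ x : V, (deg G x : ℂ)) := by
  have h := msumP_coeff1 (fun x => (deg G x : ℂ)) univ (empty_mem_matchings G) (LM_H1 G)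
    (LM_Hcov G)
  rw [Finset.card_univ] at h
  rw [LM_eq_msumP]
  exact h

lemma LM_coeff2 :
    (LM ℂ G * X^4).coeff (Fintype.card V + 2)
      = ((∑ x : V, (deg G x : ℂ))^2 - ∑ x : V, (deg G x : ℂ)^2)/2
        - ((edges G).card : ℂ) := by
  have h := msumP_coeff2 (fun x => (deg G x : ℂ)) univ (empty_mem_matchings G) (LM_H1 G)
    (LM_Hcov G)
  rw [Finset.card_univ, eA_two] at h
  rw [LM_eq_msumP]
  exact h

lemma LM_coeff3 :
    (LM ℂ G * X^4).coeff (Fintype.card V + 1)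
      = -(((∑ x : V, (deg G x : ℂ))^3
            - 3*(∑ x : V, (deg G x : ℂ))*(∑ x : V, (deg G x : ℂ)^2)
            + 2*(∑ x : V, (deg G x : ℂ)^3))/6)
        + (((edges G).card : ℂ) * (∑ x : V, (deg G x : ℂ)) - ∑ x : V, (deg G x : ℂ)^2) := by
  have h := msumP_coeff3 (fun x => (deg G x : ℂ)) univ (empty_mem_matchings G) (LM_H1 G)
    (LM_Hcov G)
  rw [Finset.card_univ, eA_three] at h
  have h2 : ∑ e ∈ edges G, ∑ x ∈ univ \ covered ({e} : Finset (Sym2 V)), (deg G x : ℂ)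
      = ((edges G).card : ℂ) * (∑ x : V, (deg G x : ℂ)) - ∑ x : V, (deg G x : ℂ)^2 := by
    rw [Finset.sum_congr rfl
      (fun e _ => Finset.sum_sdiff_eq_sub (Finset.subset_univ (covered {e})))]
    rw [Finset.sum_sub_distrib, Finset.sum_const, nsmul_eq_mul, handshake']
  rw [h2] at h
  rw [LM_eq_msumP]
  exact h

variable (w : V)

lemma Nw_coeff0 : (Nw G w * X^4).coeff (Fintype.card V + 3) = 1 := by
  have hpos : 1 ≤ Fintype.card V := Fintype.card_pos_iff.2 ⟨w⟩
  have h := msumP_coeff0 (fun x => (deg G x : ℂ)) (univ.erase w) (Nw_H0 G w) (Nw_H1 G w)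
    (Nw_Hcov G w)
  rw [Finset.card_erase_of_mem (Finset.mem_univ w), Finset.card_univ,
    show Fintype.card V - 1 + 4 = Fintype.card V + 3 by omega] at h
  exact h

lemma Nw_coeff1 :
    (Nw G w * X^4).coeff (Fintype.card V + 2)
      = -((∑ x : V, (deg G x : ℂ)) - (deg G w : ℂ)) := by
  have hpos : 1 ≤ Fintype.card V := Fintype.card_pos_iff.2 ⟨w⟩
  have h := msumP_coeff1 (fun x => (deg G x : ℂ)) (univ.erase w) (Nw_H0 G w) (Nw_H1 G w)
    (Nw_Hcov G w)
  rw [Finset.card_erase_of_mem (Finset.mem_univ w), Finset.card_univ,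
    show Fintype.card V - 1 + 3 = Fintype.card V + 2 by omega,
    Finset.sum_erase_eq_sub (Finset.mem_univ w)] at h
  exact h

lemma deg_le_card_edges : deg G w ≤ (edges G).card := by
  rw [← card_incidence G w]
  exact Finset.card_filter_le _ _

lemma Nw_coeff2 :
    (Nw G w * X^4).coeff (Fintype.card V + 1)
      = (((∑ x : V, (deg G x : ℂ)) - (deg G w : ℂ))^2
          - ((∑ x : V, (deg G x : ℂ)^2) - (deg G w : ℂ)^2))/2
        - (((edges G).card : ℂ) - (deg G w : ℂ)) := by
  have hpos : 1 ≤ Fintype.card V := Fintype.card_pos_iff.2 ⟨w⟩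
  have h := msumP_coeff2 (fun x => (deg G x : ℂ)) (univ.erase w) (Nw_H0 G w) (Nw_H1 G w)
    (Nw_Hcov G w)
  rw [Finset.card_erase_of_mem (Finset.mem_univ w), Finset.card_univ,
    show Fintype.card V - 1 + 2 = Fintype.card V + 1 by omega,
    eA_two, Finset.sum_erase_eq_sub (Finset.mem_univ w), card_edges_not_incident,
    Nat.cast_sub (deg_le_card_edges G w)] at h
  have h2 : ∑ x ∈ univ.erase w, (deg G x : ℂ)^2
      = (∑ x : V, (deg G x : ℂ)^2) - (deg G w : ℂ)^2 :=
    Finset.sum_erase_eq_sub (Finset.mem_univ w)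
  rw [h2] at h
  exact h

lemma Nw_coeff3 :
    (Nw G w * X^4).coeff (Fintype.card V)
      = -((((∑ x : V, (deg G x : ℂ)) - (deg G w : ℂ))^3
            - 3*((∑ x : V, (deg G x : ℂ)) - (deg G w : ℂ))
                *((∑ x : V, (deg G x : ℂ)^2) - (deg G w : ℂ)^2)
            + 2*((∑ x : V, (deg G x : ℂ)^3) - (deg G w : ℂ)^3))/6)
        + ((((edges G).card : ℂ) - (deg G w : ℂ))
              * ((∑ x : V, (deg G x : ℂ)) - (deg G w : ℂ))
            - ((∑ x : V, (deg G x : ℂ)^2)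
                - ((deg G w : ℂ) * (deg G w : ℂ)
                    + ∑ x ∈ univ.filter (G.Adj w), (deg G x : ℂ)))) := by
  have hpos : 1 ≤ Fintype.card V := Fintype.card_pos_iff.2 ⟨w⟩
  have h := msumP_coeff3 (fun x => (deg G x : ℂ)) (univ.erase w) (Nw_H0 G w) (Nw_H1 G w)
    (Nw_Hcov G w)
  rw [Finset.card_erase_of_mem (Finset.mem_univ w), Finset.card_univ,
    show Fintype.card V - 1 + 1 = Fintype.card V by omega, eA_three] at h
  have hsub : ∀ e ∈ (edges G).filter (fun e => w ∉ e),
      covered ({e} : Finset (Sym2 V)) ⊆ univ.erase w :=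
    fun e he => (edge_facts (univ.erase w) (Nw_H1 G w) (Nw_Hcov G w) e he).1
  have h2 : ∑ e ∈ (edges G).filter (fun e => w ∉ e),
      ∑ x ∈ (univ.erase w) \ covered ({e} : Finset (Sym2 V)), (deg G x : ℂ)
      = (((edges G).card : ℂ) - (deg G w : ℂ))
          * ((∑ x : V, (deg G x : ℂ)) - (deg G w : ℂ))
        - ((∑ x : V, (deg G x : ℂ)^2)
            - ((deg G w : ℂ) * (deg G w : ℂ)
                + ∑ x ∈ univ.filter (G.Adj w), (deg G x : ℂ))) := by
    rw [Finset.sum_congr rfl (fun e he => Finset.sum_sdiff_eq_sub (hsub e he))]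
    rw [Finset.sum_sub_distrib, Finset.sum_const, nsmul_eq_mul, card_edges_not_incident,
      Nat.cast_sub (deg_le_card_edges G w),
      Finset.sum_erase_eq_sub (Finset.mem_univ w)]
    have h3 := sum_not_incident_cov G w (fun x => (deg G x : ℂ))
    rw [h3]
    have h4 : ∑ x : V, (deg G x : ℂ) * (deg G x : ℂ) = ∑ x : V, (deg G x : ℂ)^2 :=
      Finset.sum_congr rfl fun x _ => (sq ((deg G x : ℂ))).symm
    rw [h4]
  rw [h2] at h
  have h5 : ∑ x ∈ univ.erase w, (deg G x : ℂ)
      = (∑ x : V, (deg G x : ℂ)) - (deg G w : ℂ) :=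
    Finset.sum_erase_eq_sub (Finset.mem_univ w)
  have h6 : ∑ x ∈ univ.erase w, (deg G x : ℂ)^2
      = (∑ x : V, (deg G x : ℂ)^2) - (deg G w : ℂ)^2 :=
    Finset.sum_erase_eq_sub (Finset.mem_univ w)
  have h7 : ∑ x ∈ univ.erase w, (deg G x : ℂ)^3
      = (∑ x : V, (deg G x : ℂ)^3) - (deg G w : ℂ)^3 :=
    Finset.sum_erase_eq_sub (Finset.mem_univ w)
  rw [h5, h6, h7] at h
  exact h

end GraphCoeffValues

/-- `p_4(G+uv) - p_4(G) = 4(S_u + S_v) + 4a³ + 18a² + 4ab + 24a + 4b³ + 18b² + 24b + 16`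
where `a = d_G(u)`, `b = d_G(v)`. -/
theorem delta_p4 [Fintype V] (G : SimpleGraph V) (u v : V) (huv : u ≠ v)
    (hne : ¬ G.Adj u v) :
    psum (addEdge G u v) 4 - psum G 4 =
      4 * ((Ssum G u : ℂ) + (Ssum G v : ℂ))
        + 4 * (deg G u : ℂ)^3 + 18 * (deg G u : ℂ)^2
        + 4 * (deg G u : ℂ) * (deg G v : ℂ) + 24 * (deg G u : ℂ)
        + 4 * (deg G v : ℂ)^3 + 18 * (deg G v : ℂ)^2 + 24 * (deg G v : ℂ) + 16 := by
  classical
  obtain ⟨hmG, hdG⟩ := LM_monic G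
  obtain ⟨hmG', hdG'⟩ := LM_monic (addEdge G u v)
  have hp4G := psum4_of_monic (LM ℂ G) hmG
  rw [hdG] at hp4G
  have hp4G' := psum4_of_monic (LM ℂ (addEdge G u v)) hmG'
  rw [hdG'] at hp4G'
  have e1 : psum G 4 = (((LM ℂ G).roots).map (· ^ 4)).sum := rfl
  have e1' : psum (addEdge G u v) 4
      = (((LM ℂ (addEdge G u v)).roots).map (· ^ 4)).sum := rfl
  have hrec := LM_addEdge G u v huv hne
  have hcoeff : ∀ j, (LM ℂ (addEdge G u v) * X^4).coeff j
      = (LM ℂ G * X^4).coeff j - (Nw G u * X^4).coeff j - (Nw G v * X^4).coeff j := by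
    intro j
    rw [hrec, sub_mul, sub_mul, coeff_sub, coeff_sub]
  have hSu : (Ssum G u : ℂ) = ∑ x ∈ univ.filter (G.Adj u), (deg G x : ℂ) := by
    rw [Ssum]; push_cast; rfl
  have hSv : (Ssum G v : ℂ) = ∑ x ∈ univ.filter (G.Adj v), (deg G x : ℂ) := by
    rw [Ssum]; push_cast; rfl
  rw [e1', hp4G', e1, hp4G, hcoeff (Fintype.card V + 3), hcoeff (Fintype.card V + 2),
    hcoeff (Fintype.card V + 1), hcoeff (Fintype.card V),
    LM_coeff1 G, LM_coeff2 G, LM_coeff3 G,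
    Nw_coeff0 G u, Nw_coeff0 G v, Nw_coeff1 G u, Nw_coeff1 G v,
    Nw_coeff2 G u, Nw_coeff2 G v, Nw_coeff3 G u, Nw_coeff3 G v, hSu, hSv]
  ring

end LMRIV
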